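/- If S is a semigroup in which the natural conjugacy ∼ₙ is the universal relation S × S and S contains an idempotent, then S is a rectangular band (i.e., every element is idempotent and xyx = x for all x, y ∈ S). -/

import Mathlib

/-- Natural conjugacy. -/
def NatConj {S : Type*} [Semigroup S] (a b : S) : Prop :=
  ∃ g h : WithOne S,
    (a : WithOne S) * g = g * (b : WithOne S) ∧
    (b : WithOne S) * h = h * (a : WithOne S) ∧
    h * (a : WithOne S) * g = (b : WithOne S) ∧
    g * (b : WithOne S) * h = (a : WithOne S)

/-- If ∼ₙ is the universal relation on `S` and `S` has an idempotent,
then `S` is a rectangular band. -/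
theorem rectangular_band_of_natConj_universal {S : Type*} [Semigroup S]
    (huniv : ∀ a b : S, NatConj a b) (hidem : ∃ e : S, e * e = e) :
    (∀ x : S, x * x = x) ∧ (∀ x y : S, x * y * x = x) := by
  obtain ⟨e, he⟩ := hidem
  have idem : ∀ x : S, x * x = x := by
    intro x
    obtain ⟨g, h, h1, h2, h3, h4⟩ := huniv x e
    have E1 : (e : WithOne S) * h * g = (e : WithOne S) := by rw [h2]; exact h3
    have key : (x : WithOne S) * (x : WithOne S) = (x : WithOne S) := by
      calc (x : WithOne S) * (x : WithOne S)
          = (g * (e : WithOne S) * h) * (g * (e : WithOne S) * h) := by rw [h4]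
        _ = g * ((e : WithOne S) * h * g) * ((e : WithOne S) * h) := by
            simp only [mul_assoc]
        _ = g * (e : WithOne S) * ((e : WithOne S) * h) := by rw [E1]
        _ = g * ((e : WithOne S) * (e : WithOne S)) * h := by simp only [mul_assoc]
        _ = g * (e : WithOne S) * h := by rw [← WithOne.coe_mul, he, mul_assoc]
        _ = (x : WithOne S) := h4
    have : ((x * x : S) : WithOne S) = ((x : S) : WithOne S) := by
      rw [WithOne.coe_mul]; exact key
    exact WithOne.coe_inj.mp this
  refine ⟨idem, ?_⟩
  have sq : ∀ z : WithOne S, z * z = z := by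
    intro z
    induction z using WithOne.cases_on
    · exact one_mul 1
    · intro a; rw [← WithOne.coe_mul, idem a]
  intro x y
  obtain ⟨g, h, h1, h2, h3, h4⟩ := huniv x y
  have bg : (y : WithOne S) * g = (y : WithOne S) := by
    calc (y : WithOne S) * g = h * (x : WithOne S) * g * g := by rw [h3]
      _ = h * (x : WithOne S) * (g * g) := by simp only [mul_assoc]
      _ = h * (x : WithOne S) * g := by rw [sq g]
      _ = (y : WithOne S) := h3
  have ah : (x : WithOne S) * h = (x : WithOne S) := by
    calc (x : WithOne S) * h = g * (y : WithOne S) * h * h := by rw [h4]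
      _ = g * (y : WithOne S) * (h * h) := by simp only [mul_assoc]
      _ = g * (y : WithOne S) * h := by rw [sq h]
      _ = (x : WithOne S) := h4
  have key : (x : WithOne S) * (y : WithOne S) * (x : WithOne S) = (x : WithOne S) := by
    calc (x : WithOne S) * (y : WithOne S) * (x : WithOne S)
        = (x : WithOne S) * (y : WithOne S) * (g * (y : WithOne S) * h) := by rw [h4]
      _ = (x : WithOne S) * ((y : WithOne S) * g) * ((y : WithOne S) * h) := by
          simp only [mul_assoc]
      _ = (x : WithOne S) * (y : WithOne S) * ((y : WithOne S) * h) := by rw [bg]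
      _ = (x : WithOne S) * ((y : WithOne S) * (y : WithOne S)) * h := by
          simp only [mul_assoc]
      _ = (x : WithOne S) * (y : WithOne S) * h := by rw [sq]
      _ = (x : WithOne S) * ((y : WithOne S) * h) := by rw [mul_assoc]
      _ = (x : WithOne S) * (h * (x : WithOne S)) := by rw [h2]
      _ = ((x : WithOne S) * h) * (x : WithOne S) := by rw [mul_assoc]
      _ = (x : WithOne S) * (x : WithOne S) := by rw [ah]
      _ = (x : WithOne S) := sq _
  have : ((x * y * x : S) : WithOne S) = ((x : S) : WithOne S) := by
    rw [WithOne.coe_mul, WithOne.coe_mul]; exact key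
  exact WithOne.coe_inj.mp this
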